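/- Fix p ∈ (0,1). If X_n ∼ Bin(n, p) and k_n is a sequence of integers with k_n = np + o(√n) (i.e., |k_n − np|/√n → 0), then P(X_n = k_n) · √(2πnp(1−p)) → 1 as n → ∞. -/

import Mathlib

open Filter


lemma aux_g_lb {t : ℝ} (ht : -1 < t) : t ≤ (1 + t) * Real.log (1 + t) := by
  have h1 : (0:ℝ) < 1 + t := by linarith
  have h := Real.log_le_sub_one_of_pos (x := (1+t)⁻¹) (by positivity)
  rw [Real.log_inv] at h
  have h2 : 1 - (1+t)⁻¹ ≤ Real.log (1+t) := by linarith
  have h3 : (1+t) * (1 - (1+t)⁻¹) = t := by field_simp; ring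
  nlinarith [mul_le_mul_of_nonneg_left h2 h1.le]

lemma aux_g_ub {t : ℝ} (ht : -1 < t) : (1 + t) * Real.log (1 + t) ≤ t + t^2 := by
  have h1 : (0:ℝ) < 1 + t := by linarith
  have h2 : Real.log (1+t) ≤ t := by
    have := Real.log_le_sub_one_of_pos h1; linarith
  nlinarith [mul_le_mul_of_nonneg_left h2 h1.le]

lemma aux_xlog_lb {x c : ℝ} (hx : 0 < x) (hc : 0 < c) :
    x - c ≤ x * Real.log (x / c) := by
  have ht : (-1:ℝ) < x/c - 1 := by
    have : 0 < x/c := by positivity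
    linarith
  have h := aux_g_lb ht
  have he : (1 + (x/c-1)) = x/c := by ring
  rw [he] at h
  have h1 := mul_le_mul_of_nonneg_left h hc.le
  have h2 : c * (x/c * Real.log (x/c)) = x * Real.log (x/c) := by field_simp
  have h3 : c * (x/c - 1) = x - c := by field_simp
  linarith [h2 ▸ h3 ▸ h1]

lemma aux_xlog_ub {x c : ℝ} (hx : 0 < x) (hc : 0 < c) :
    x * Real.log (x / c) ≤ x - c + (x - c)^2 / c := by
  have ht : (-1:ℝ) < x/c - 1 := by
    have : 0 < x/c := by positivity
    linarith
  have h := aux_g_ub ht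
  have he : (1 + (x/c-1)) = x/c := by ring
  rw [he] at h
  have h1 := mul_le_mul_of_nonneg_left h hc.le
  have h2 : c * (x/c * Real.log (x/c)) = x * Real.log (x/c) := by field_simp
  have h3 : c * ((x/c - 1) + (x/c-1)^2) = x - c + (x-c)^2/c := by field_simp
  linarith [h2 ▸ h3 ▸ h1]

/-- The Stirling ratio `n! / (√(2πn) (n/e)^n)`. -/
noncomputable def stR (n : ℕ) : ℝ :=
  (n.factorial : ℝ) / (Real.sqrt (2 * Real.pi * n) * ((n : ℝ) / Real.exp 1) ^ n)

lemma stR_eq (n : ℕ) : stR n = Stirling.stirlingSeq n / Real.sqrt Real.pi := by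
  rw [stR, Stirling.stirlingSeq]
  have h : (2 * Real.pi * n : ℝ) = Real.pi * (2 * n) := by ring
  rw [h, Real.sqrt_mul Real.pi_pos.le, div_mul_eq_div_div_swap, div_div]
  ring_nf

lemma stR_tendsto : Tendsto stR atTop (nhds 1) := by
  have h := Stirling.tendsto_stirlingSeq_sqrt_pi.div_const (Real.sqrt Real.pi)
  have hπ : Real.sqrt Real.pi ≠ 0 := by positivity
  rw [div_self hπ] at h
  exact h.congr fun n => (stR_eq n).symm

lemma main_eq (p : ℝ) (hp0 : 0 < p) (hp1 : p < 1) (K M : ℕ) (hK1 : 1 ≤ K) (hM1 : 1 ≤ M) :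
    ((K+M).choose K : ℝ) * p ^ K * (1 - p) ^ M *
      Real.sqrt (2 * Real.pi * ((K+M : ℕ) : ℝ) * p * (1 - p)) =
    (stR (K+M) / (stR K * stR M)) *
      Real.sqrt ((((K+M : ℕ):ℝ))^2 * p * (1-p) / ((K:ℝ) * (M:ℝ))) *
      Real.exp ((K:ℝ) * Real.log ((((K+M:ℕ):ℝ) * p)/(K:ℝ))
        + (M:ℝ) * Real.log ((((K+M:ℕ):ℝ)*(1-p))/(M:ℝ))) := by
  have hq : 0 < 1 - p := by linarith
  have ha : (0:ℝ) < K := by exact_mod_cast hK1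
  have hb : (0:ℝ) < M := by exact_mod_cast hM1
  have hab : (0:ℝ) < ((K+M:ℕ):ℝ) := by push_cast; linarith
  have hπ := Real.pi_pos
  have he : (0:ℝ) < Real.exp 1 := Real.exp_pos 1
  have E2 : Real.exp ((K:ℝ) * Real.log ((((K+M:ℕ):ℝ) * p)/(K:ℝ))
        + (M:ℝ) * Real.log ((((K+M:ℕ):ℝ)*(1-p))/(M:ℝ)))
      = ((((K+M:ℕ):ℝ) * p)/(K:ℝ))^K * ((((K+M:ℕ):ℝ)*(1-p))/(M:ℝ))^M := by
    rw [Real.exp_add, Real.exp_nat_mul, Real.exp_nat_mul,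
      Real.exp_log (by positivity), Real.exp_log (by positivity)]
  have E1 : Real.sqrt ((((K+M:ℕ):ℝ))^2 * p * (1-p) / ((K:ℝ) * (M:ℝ)))
      = Real.sqrt (2 * Real.pi * ((K+M:ℕ):ℝ))
        * Real.sqrt (2 * Real.pi * ((K+M : ℕ) : ℝ) * p * (1 - p))
        / (Real.sqrt (2 * Real.pi * (K:ℝ)) * Real.sqrt (2 * Real.pi * (M:ℝ))) := by
    rw [← Real.sqrt_mul (by positivity), ← Real.sqrt_mul (by positivity),
      ← Real.sqrt_div (by positivity)]
    congr 1
    field_simp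
  have hchoose : (((K+M).choose K : ℕ):ℝ)
      = ((K+M).factorial : ℝ) / ((K.factorial : ℝ) * (M.factorial : ℝ)) := by
    rw [Nat.cast_choose ℝ (Nat.le_add_right K M), Nat.add_sub_cancel_left]
  rw [E1, E2, hchoose, stR, stR, stR]
  have hfK : ((K.factorial : ℕ):ℝ) ≠ 0 := by positivity
  have hfM : ((M.factorial : ℕ):ℝ) ≠ 0 := by positivity
  have hsK : Real.sqrt (2 * Real.pi * (K:ℝ)) ≠ 0 := by positivity
  have hsM : Real.sqrt (2 * Real.pi * (M:ℝ)) ≠ 0 := by positivity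
  have hsN : Real.sqrt (2 * Real.pi * ((K+M:ℕ):ℝ)) ≠ 0 := by positivity
  have hcastN : ((K+M:ℕ):ℝ) = (K:ℝ) + (M:ℝ) := by push_cast; ring
  simp only [hcastN, div_pow, mul_pow, pow_add]
  field_simp

/-- The probability that a `Bin(n,p)` random variable equals the integer `k`. -/
noncomputable def binomProb (n : ℕ) (p : ℝ) (k : ℤ) : ℝ :=
  if 0 ≤ k ∧ k ≤ (n : ℤ) then
    (n.choose k.toNat : ℝ) * p ^ k.toNat * (1 - p) ^ (n - k.toNat)
  else 0

set_option maxHeartbeats 1000000 in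
theorem stmt_5 (p : ℝ) (hp0 : 0 < p) (hp1 : p < 1) (k : ℕ → ℤ)
    (hk : Tendsto (fun n : ℕ => |(k n : ℝ) - n * p| / Real.sqrt n) atTop (nhds 0)) :
    Tendsto
      (fun n : ℕ =>
        binomProb n p (k n) * Real.sqrt (2 * Real.pi * n * p * (1 - p)))
      atTop (nhds 1) := by
  have hq : (0:ℝ) < 1 - p := by linarith
  -- basic limits
  have hd : Tendsto (fun n : ℕ => ((k n : ℝ) - n * p) / Real.sqrt n) atTop (nhds 0) := by
    rw [tendsto_zero_iff_norm_tendsto_zero]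
    refine hk.congr fun n => ?_
    rw [Real.norm_eq_abs, abs_div, abs_of_nonneg (Real.sqrt_nonneg _)]
  have hsq : Tendsto (fun n : ℕ => ((k n : ℝ) - n * p)^2 / n) atTop (nhds 0) := by
    have h := hd.mul hd
    rw [mul_zero] at h
    refine h.congr fun n => ?_
    rw [div_mul_div_comm, Real.mul_self_sqrt (Nat.cast_nonneg n), sq]
  have hdn : Tendsto (fun n : ℕ => ((k n : ℝ) - n * p) / n) atTop (nhds 0) := by
    have hinv : Tendsto (fun n : ℕ => 1 / Real.sqrt n) atTop (nhds 0) := by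
      have h0 : Tendsto (fun n : ℕ => (n:ℝ)⁻¹) atTop (nhds 0) :=
        tendsto_inv_atTop_zero.comp tendsto_natCast_atTop_atTop
      have h1 := (Real.continuous_sqrt.tendsto 0).comp h0
      rw [Real.sqrt_zero] at h1
      refine h1.congr fun n => ?_
      simp [Function.comp, Real.sqrt_inv, one_div]
    have h := hd.mul hinv
    rw [mul_zero] at h
    refine h.congr fun n => ?_
    rw [div_mul_div_comm, mul_one, Real.mul_self_sqrt (Nat.cast_nonneg n)]
  have hratio : Tendsto (fun n : ℕ => (k n : ℝ) / n) atTop (nhds p) := by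
    have h := hdn.const_add p
    rw [add_zero] at h
    refine h.congr' ?_
    filter_upwards [eventually_ge_atTop 1] with n hn
    have hn0 : (n:ℝ) ≠ 0 := by positivity
    field_simp
    ring
  -- eventual good set
  have hgood : ∀ᶠ n : ℕ in atTop,
      1 ≤ n ∧ (n:ℝ)*(p/2) < (k n : ℝ) ∧ (k n : ℝ) < (n:ℝ)*((1+p)/2) := by
    have hmem : ∀ᶠ n : ℕ in atTop, (k n : ℝ)/n ∈ Set.Ioo (p/2) ((1+p)/2) :=
      hratio (Ioo_mem_nhds (by linarith) (by linarith))
    filter_upwards [hmem, eventually_ge_atTop 1] with n h1 h2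
    have hn0 : (0:ℝ) < n := by exact_mod_cast h2
    have ha := (lt_div_iff₀ hn0).1 h1.1
    have hb := (div_lt_iff₀ hn0).1 h1.2
    exact ⟨h2, by linarith, by linarith⟩
  have hfacts : ∀ᶠ n : ℕ in atTop,
      1 ≤ (k n).toNat ∧ 1 ≤ n - (k n).toNat ∧ (k n).toNat + (n - (k n).toNat) = n ∧
      (((k n).toNat : ℕ):ℝ) = (k n : ℝ) ∧
      (((n - (k n).toNat : ℕ)):ℝ) = (n:ℝ) - (k n : ℝ) ∧
      (n:ℝ)*(p/2) < (((k n).toNat:ℕ):ℝ) ∧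
      (n:ℝ)*((1-p)/2) < (((n - (k n).toNat:ℕ)):ℝ) ∧
      0 ≤ k n ∧ k n ≤ (n:ℤ) := by
    filter_upwards [hgood] with n hf
    obtain ⟨h1, h2, h3⟩ := hf
    have hn0 : (0:ℝ) < n := by exact_mod_cast h1
    have hk0 : (0:ℝ) < (k n : ℝ) := lt_of_le_of_lt (by positivity) h2
    have hk0' : 0 ≤ k n := by exact_mod_cast hk0.le
    have hkr : (k n : ℝ) < n := by nlinarith
    have hkle : k n ≤ (n:ℤ) := by exact_mod_cast hkr.le
    have hKcast : (((k n).toNat : ℕ):ℝ) = (k n : ℝ) := by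
      have := Int.toNat_of_nonneg hk0'
      exact_mod_cast congrArg (fun z : ℤ => (z:ℝ)) this
    have hKn : (k n).toNat ≤ n := by
      have : ((k n).toNat : ℝ) ≤ n := by rw [hKcast]; exact hkr.le
      exact_mod_cast this
    have hKM : (k n).toNat + (n - (k n).toNat) = n := Nat.add_sub_cancel' hKn
    have hMcast : (((n - (k n).toNat : ℕ)):ℝ) = (n:ℝ) - (k n : ℝ) := by
      rw [Nat.cast_sub hKn, hKcast]
    have hK1 : 1 ≤ (k n).toNat := by
      by_contra h
      have : (k n).toNat = 0 := by omega
      rw [this] at hKcast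
      simp at hKcast
      nlinarith
    have hMlow : (n:ℝ)*((1-p)/2) < (((n - (k n).toNat:ℕ)):ℝ) := by
      rw [hMcast]; nlinarith
    have hM1 : 1 ≤ n - (k n).toNat := by
      by_contra h
      have h0 : n - (k n).toNat = 0 := by omega
      rw [h0] at hMlow
      simp at hMlow
      nlinarith
    exact ⟨hK1, hM1, hKM, hKcast, hMcast, by rw [hKcast]; exact h2, hMlow, hk0', hkle⟩
  -- divergence of K and M
  have TA : Tendsto (fun n : ℕ => (k n).toNat) atTop atTop := by
    rw [← tendsto_natCast_atTop_iff (R := ℝ)]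
    refine tendsto_atTop_mono' atTop ?_
      (tendsto_natCast_atTop_atTop.atTop_mul_const (show (0:ℝ) < p/2 by linarith))
    filter_upwards [hfacts] with n hf
    exact hf.2.2.2.2.2.1.le
  have TB : Tendsto (fun n : ℕ => n - (k n).toNat) atTop atTop := by
    rw [← tendsto_natCast_atTop_iff (R := ℝ)]
    refine tendsto_atTop_mono' atTop ?_
      (tendsto_natCast_atTop_atTop.atTop_mul_const (show (0:ℝ) < (1-p)/2 by linarith))
    filter_upwards [hfacts] with n hf
    exact hf.2.2.2.2.2.2.1.le
  -- ratios
  have hKr : Tendsto (fun n : ℕ => (((k n).toNat:ℕ):ℝ) / n) atTop (nhds p) := by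
    refine hratio.congr' ?_
    filter_upwards [hfacts] with n hf
    rw [hf.2.2.2.1]
  have hMr : Tendsto (fun n : ℕ => (((n - (k n).toNat:ℕ)):ℝ) / n) atTop (nhds (1-p)) := by
    have h := (tendsto_const_nhds (x := (1:ℝ)) (f := atTop)).sub hratio
    refine h.congr' ?_
    filter_upwards [hfacts, eventually_ge_atTop 1] with n hf hn
    have hn0 : (n:ℝ) ≠ 0 := by positivity
    rw [hf.2.2.2.2.1]
    field_simp
  -- T1
  have T1 : Tendsto (fun n : ℕ => stR n / (stR ((k n).toNat) * stR (n - (k n).toNat)))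
      atTop (nhds 1) := by
    have h := stR_tendsto.div ((stR_tendsto.comp TA).mul (stR_tendsto.comp TB)) (by norm_num)
    rw [show (1:ℝ)/(1*1) = 1 by norm_num] at h
    exact h
  -- T2
  have T2 : Tendsto (fun n : ℕ =>
      Real.sqrt ((n:ℝ)^2 * p * (1-p) / ((((k n).toNat:ℕ):ℝ) * (((n - (k n).toNat:ℕ)):ℝ))))
      atTop (nhds 1) := by
    have hin : Tendsto (fun n : ℕ =>
        (n:ℝ)^2 * p * (1-p) / ((((k n).toNat:ℕ):ℝ) * (((n - (k n).toNat:ℕ)):ℝ)))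
        atTop (nhds 1) := by
      have h := (tendsto_const_nhds (x := p*(1-p)) (f := (atTop : Filter ℕ))).div
        (hKr.mul hMr) (by positivity)
      rw [show p*(1-p)/(p*(1-p)) = 1 by field_simp] at h
      refine h.congr' ?_
      filter_upwards [hfacts, eventually_ge_atTop 1] with n hf hn
      have hn0 : (n:ℝ) ≠ 0 := by positivity
      have hK0 : (((k n).toNat:ℕ):ℝ) ≠ 0 := by
        have : (1:ℝ) ≤ (((k n).toNat:ℕ):ℝ) := by exact_mod_cast hf.1
        linarith
      have hM0 : (((n - (k n).toNat:ℕ)):ℝ) ≠ 0 := by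
        have : (1:ℝ) ≤ (((n - (k n).toNat:ℕ)):ℝ) := by exact_mod_cast hf.2.1
        linarith
      rw [Pi.div_apply]
      field_simp
    have h := (Real.continuous_sqrt.tendsto 1).comp hin
    rw [Real.sqrt_one] at h
    exact h
  -- T3 : exponent tends to 0
  have T3 : Tendsto (fun n : ℕ =>
      ((((k n).toNat:ℕ):ℝ) * Real.log (((n:ℝ)*p)/(((k n).toNat:ℕ):ℝ))
        + (((n - (k n).toNat:ℕ)):ℝ) * Real.log (((n:ℝ)*(1-p))/(((n - (k n).toNat:ℕ)):ℝ))))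
      atTop (nhds 0) := by
    have hU : Tendsto (fun n : ℕ => ((k n:ℝ) - n*p)^2/n * (1/p + 1/(1-p))) atTop (nhds 0) := by
      simpa using hsq.mul_const (1/p + 1/(1-p))
    have hUneg := hU.neg
    rw [neg_zero] at hUneg
    refine tendsto_of_tendsto_of_tendsto_of_le_of_le' hUneg
      (tendsto_const_nhds (x := (0:ℝ))) ?_ ?_
    · filter_upwards [hfacts, eventually_ge_atTop 1] with n hf hn
      obtain ⟨hK1, hM1, hKM, hKcast, hMcast, _, _, _, _⟩ := hf
      have hn0 : (0:ℝ) < n := by exact_mod_cast hn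
      have ha : (0:ℝ) < (((k n).toNat:ℕ):ℝ) := by exact_mod_cast hK1
      have hb : (0:ℝ) < (((n - (k n).toNat:ℕ)):ℝ) := by exact_mod_cast hM1
      have hnp : (0:ℝ) < (n:ℝ)*p := by positivity
      have hnq : (0:ℝ) < (n:ℝ)*(1-p) := by positivity
      have l1 : Real.log (((n:ℝ)*p)/(((k n).toNat:ℕ):ℝ))
          = -Real.log ((((k n).toNat:ℕ):ℝ)/((n:ℝ)*p)) := by
        rw [Real.log_div (by positivity) (by positivity),
          Real.log_div (by positivity) (by positivity)]
        ring
      have l2 : Real.log (((n:ℝ)*(1-p))/(((n - (k n).toNat:ℕ)):ℝ))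
          = -Real.log ((((n - (k n).toNat:ℕ)):ℝ)/((n:ℝ)*(1-p))) := by
        rw [Real.log_div (by positivity) (by positivity),
          Real.log_div (by positivity) (by positivity)]
        ring
      have B2 := aux_xlog_ub ha hnp
      have B4 := aux_xlog_ub hb hnq
      have hdb : (((n - (k n).toNat:ℕ)):ℝ) - (n:ℝ)*(1-p) = -((k n:ℝ) - n*p) := by
        rw [hMcast]; ring
      have hda : (((k n).toNat:ℕ):ℝ) - (n:ℝ)*p = (k n:ℝ) - n*p := by rw [hKcast]
      rw [l1, l2]
      rw [hda] at B2
      rw [hdb] at B4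
      have hU1 : ((k n:ℝ) - n*p)^2/((n:ℝ)*p) + (-((k n:ℝ) - n*p))^2/((n:ℝ)*(1-p))
          = ((k n:ℝ)-n*p)^2/n * (1/p+1/(1-p)) := by
        field_simp
      linarith [B2, B4, hU1]
    · filter_upwards [hfacts, eventually_ge_atTop 1] with n hf hn
      obtain ⟨hK1, hM1, hKM, hKcast, hMcast, _, _, _, _⟩ := hf
      have hn0 : (0:ℝ) < n := by exact_mod_cast hn
      have ha : (0:ℝ) < (((k n).toNat:ℕ):ℝ) := by exact_mod_cast hK1
      have hb : (0:ℝ) < (((n - (k n).toNat:ℕ)):ℝ) := by exact_mod_cast hM1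
      have hnp : (0:ℝ) < (n:ℝ)*p := by positivity
      have hnq : (0:ℝ) < (n:ℝ)*(1-p) := by positivity
      have l1 : Real.log (((n:ℝ)*p)/(((k n).toNat:ℕ):ℝ))
          = -Real.log ((((k n).toNat:ℕ):ℝ)/((n:ℝ)*p)) := by
        rw [Real.log_div (by positivity) (by positivity),
          Real.log_div (by positivity) (by positivity)]
        ring
      have l2 : Real.log (((n:ℝ)*(1-p))/(((n - (k n).toNat:ℕ)):ℝ))
          = -Real.log ((((n - (k n).toNat:ℕ)):ℝ)/((n:ℝ)*(1-p))) := by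
        rw [Real.log_div (by positivity) (by positivity),
          Real.log_div (by positivity) (by positivity)]
        ring
      have B1 := aux_xlog_lb ha hnp
      have B3 := aux_xlog_lb hb hnq
      have hdb : (((n - (k n).toNat:ℕ)):ℝ) - (n:ℝ)*(1-p) = -((k n:ℝ) - n*p) := by
        rw [hMcast]; ring
      have hda : (((k n).toNat:ℕ):ℝ) - (n:ℝ)*p = (k n:ℝ) - n*p := by rw [hKcast]
      rw [l1, l2]
      rw [hda] at B1
      rw [hdb] at B3
      linarith [B1, B3]
  have T3' : Tendsto (fun n : ℕ => Real.exp
      ((((k n).toNat:ℕ):ℝ) * Real.log (((n:ℝ)*p)/(((k n).toNat:ℕ):ℝ))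
        + (((n - (k n).toNat:ℕ)):ℝ) * Real.log (((n:ℝ)*(1-p))/(((n - (k n).toNat:ℕ)):ℝ))))
      atTop (nhds 1) := by
    have h := (Real.continuous_exp.tendsto 0).comp T3
    rw [Real.exp_zero] at h
    exact h
  -- assemble
  have TG := (T1.mul T2).mul T3'
  rw [show (1:ℝ)*1*1 = 1 by norm_num] at TG
  refine TG.congr' ?_
  filter_upwards [hfacts] with n hf
  obtain ⟨hK1, hM1, hKM, hKcast, hMcast, _, _, hk0, hkle⟩ := hf
  symm
  rw [binomProb, if_pos ⟨hk0, hkle⟩]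
  have h := main_eq p hp0 hp1 ((k n).toNat) (n - (k n).toNat) hK1 hM1
  rw [hKM] at h
  exact h
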